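/- For any commutative ring R, the total quotient ring T(R[x]) is a DQ-ring: every finitely generated semi-regular ideal of the ring T(R[x]) (that is, every finitely generated ideal of T(R[x]) containing a finitely generated subideal whose annihilator in T(R[x]) is zero) is equal to T(R[x]) itself. -/

import Mathlib

open Polynomial TensorProduct

universe u v

/-- An ideal is *semi-regular* if it contains a finitely generated dense subideal
(an ideal is *dense* if its annihilator is zero). -/
def Ideal.IsSemiregular {R : Type*} [CommRing R] (I : Ideal R) : Prop :=
  ∃ J : Ideal R, J ≤ I ∧ J.FG ∧ Submodule.annihilator J = ⊥

/-- A module is *Q-torsion* if every element is annihilated by some finitely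
generated semi-regular ideal. -/
def IsQTorsion (R : Type*) (M : Type*) [CommRing R] [AddCommGroup M] [Module R M] : Prop :=
  ∀ m : M, ∃ I : Ideal R, I.FG ∧ I.IsSemiregular ∧ ∀ a ∈ I, a • m = 0

/-- Combine a list of polynomials into a single polynomial with "disjoint blocks". -/
noncomputable def comb {R : Type*} [CommRing R] : List (Polynomial R) → Polynomial R
  | [] => 0
  | p :: l => p + X ^ (p.natDegree + 1) * comb l

lemma comb_mem_span {R : Type*} [CommRing R] (l : List (Polynomial R)) :
    comb l ∈ Ideal.span {x | x ∈ l} := by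
  induction l with
  | nil => simp [comb]
  | cons p l ih =>
    refine Ideal.add_mem _ (Ideal.subset_span (by simp)) (Ideal.mul_mem_left _ _ ?_)
    exact Ideal.span_mono (fun x hx => by simp only [Set.mem_setOf_eq] at hx ⊢; simp [hx]) ih

lemma smul_comb_eq_zero {R : Type*} [CommRing R] (a : R) (l : List (Polynomial R))
    (h : a • comb l = 0) : ∀ p ∈ l, a • p = 0 := by
  induction l with
  | nil => simp
  | cons p l ih =>
    rw [comb, smul_add, ← mul_smul_comm] at h
    have hp : a • p = 0 := by
      ext n
      rcases le_or_gt n p.natDegree with hn | hn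
      · have := congrArg (fun f => Polynomial.coeff f n) h
        simp only [Polynomial.coeff_add, Polynomial.coeff_zero,
          mul_comm (X ^ (p.natDegree + 1)) _, Polynomial.coeff_mul_X_pow'] at this
        rw [if_neg (by omega)] at this
        simpa using this
      · simp [Polynomial.coeff_smul, Polynomial.coeff_eq_zero_of_natDegree_lt hn]
    rw [hp, zero_add] at h
    have hX : (X ^ (p.natDegree + 1) : Polynomial R) ∈ nonZeroDivisors (Polynomial R) :=
      (monic_X_pow _).mem_nonZeroDivisors
    have := hX.2 _ (by rw [mul_comm]; exact h)
    intro q hq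
    rcases List.mem_cons.1 hq with rfl | hq
    · exact hp
    · exact ih this q hq

/-- For any commutative ring `R`, the total quotient ring `T(R[x])` is a DQ-ring:
every finitely generated semi-regular ideal of `T(R[x])` is the whole ring. -/
theorem statement1 (R : Type u) [CommRing R]
    (A : Ideal (FractionRing (Polynomial R))) (hfg : A.FG) (hsr : A.IsSemiregular) :
    A = ⊤ := by
  classical
  set K := FractionRing (Polynomial R)
  obtain ⟨J, hJA, hJfg, hann⟩ := hsr
  obtain ⟨s, hsJ⟩ := hJfg
  have H : ∀ g : K, ∃ x : Polynomial R × nonZeroDivisors (Polynomial R),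
      g * algebraMap (Polynomial R) K x.2 = algebraMap (Polynomial R) K x.1 :=
    fun g => IsLocalization.surj _ g
  choose nd hnd using H
  set l : List (Polynomial R) := s.toList.map (fun g => (nd g).1) with hl
  have hmem : ∀ g ∈ s, algebraMap (Polynomial R) K (nd g).1 ∈ J := by
    intro g hg
    rw [← hnd g]
    exact Ideal.mul_mem_right _ _ (hsJ ▸ Ideal.subset_span hg)
  have hcombJ : algebraMap (Polynomial R) K (comb l) ∈ J := by
    have hle : Ideal.span {x | x ∈ l} ≤ Ideal.comap (algebraMap (Polynomial R) K) J := by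
      rw [Ideal.span_le]
      rintro x hx
      simp only [Set.mem_setOf_eq, hl, List.mem_map, Finset.mem_toList] at hx
      obtain ⟨g, hg, rfl⟩ := hx
      exact hmem g hg
    exact hle (comb_mem_span l)
  have hreg : comb l ∈ nonZeroDivisors (Polynomial R) := by
    rw [Polynomial.mem_nonZeroDivisors_iff]
    intro a ha
    have hCa : ∀ g ∈ s, algebraMap (Polynomial R) K (C a) * g = 0 := by
      intro g hg
      have h1 : C a * (nd g).1 = 0 := by
        have h0 := smul_comb_eq_zero a l ha (nd g).1
          (by simp only [hl, List.mem_map, Finset.mem_toList]; exact ⟨g, hg, rfl⟩)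
        rwa [Polynomial.smul_eq_C_mul] at h0
      have hu : IsUnit (algebraMap (Polynomial R) K ((nd g).2 : Polynomial R)) :=
        IsLocalization.map_units K (nd g).2
      have h2 : algebraMap (Polynomial R) K (C a) * g
          * algebraMap (Polynomial R) K ((nd g).2 : Polynomial R) = 0 := by
        rw [mul_assoc, hnd g, ← map_mul, h1, map_zero]
      exact hu.mul_left_eq_zero.1 h2
    have hmemann : algebraMap (Polynomial R) K (C a) ∈ Submodule.annihilator J := by
      rw [← hsJ, ← Ideal.submodule_span_eq, Submodule.mem_annihilator_span]
      rintro ⟨n, hn⟩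
      show algebraMap (Polynomial R) K (C a) • n = 0
      rw [smul_eq_mul]; exact hCa n hn
    rw [hann, Submodule.mem_bot] at hmemann
    have hinj : Function.Injective (algebraMap (Polynomial R) K) :=
      IsLocalization.injective (M := nonZeroDivisors (Polynomial R)) (S := K) le_rfl
    have : (C a : Polynomial R) = 0 := hinj (by rw [hmemann, map_zero])
    simpa using (Polynomial.C_eq_zero.1 this)
  have hunit : IsUnit (algebraMap (Polynomial R) K (comb l)) :=
    IsLocalization.map_units K ⟨_, hreg⟩
  exact A.eq_top_of_isUnit_mem (hJA hcombJ) hunit
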